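/- Let K₁ ⊆ ℂ be a compact set with nonempty interior, ω : K₁ → ℂ continuous, and K = {(z, ω(z)) : z ∈ K₁} ⊆ ℂ² the graph of ω. Then the function f(z, w) = |z| is continuous on K but is not a uniform limit on K of functions holomorphic on open neighborhoods of K in ℂ². -/

import Mathlib

/-- Let `K₁ ⊆ ℂ` be compact with nonempty interior, `ω` continuous on `K₁` and
holomorphic on its interior, and let `K ⊆ ℂ²` be the graph of `ω`. Then
`f(z,w) = |z|` is continuous on `K`, but it is not a uniform limit on `K` of
functions holomorphic on open neighbourhoods of `K`. -/
theorem stmt12 (K₁ : Set ℂ) (hK₁ : IsCompact K₁) (hint : (interior K₁).Nonempty)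
    (ω : ℂ → ℂ) (hωc : ContinuousOn ω K₁) (hωh : DifferentiableOn ℂ ω (interior K₁)) :
    let K : Set (ℂ × ℂ) := {p : ℂ × ℂ | p.1 ∈ K₁ ∧ p.2 = ω p.1}
    let f : ℂ × ℂ → ℂ := fun p => ((‖p.1‖ : ℝ) : ℂ)
    ContinuousOn f K ∧
      ¬ ∀ ε > (0 : ℝ), ∃ (g : ℂ × ℂ → ℂ) (V : Set (ℂ × ℂ)),
          IsOpen V ∧ K ⊆ V ∧ DifferentiableOn ℂ g V ∧
          ∀ p ∈ K, ‖f p - g p‖ < ε := by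
  intro K f
  constructor
  · exact (Complex.continuous_ofReal.comp
      (continuous_norm.comp continuous_fst)).continuousOn
  · intro H
    have Hn : ∀ n : ℕ, ∃ (g : ℂ × ℂ → ℂ) (V : Set (ℂ × ℂ)),
        IsOpen V ∧ K ⊆ V ∧ DifferentiableOn ℂ g V ∧
        ∀ p ∈ K, ‖f p - g p‖ < 1 / (n + 1) := fun n =>
      H (1 / (n + 1)) (by positivity)
    choose g V hVo hKV hg hgb using Hn
    set F : ℕ → ℂ → ℂ := fun n z => g n (z, ω z) with hF
    have hmem : ∀ z ∈ K₁, (z, ω z) ∈ K := fun z hz => ⟨hz, rfl⟩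
    have hFd : ∀ n, DifferentiableOn ℂ (F n) (interior K₁) := by
      intro n
      have hpair : DifferentiableOn ℂ (fun z : ℂ => (z, ω z)) (interior K₁) :=
        differentiableOn_id.prodMk hωh
      exact (hg n).comp hpair fun z hz => hKV n (hmem z (interior_subset hz))
    have hunif : TendstoUniformlyOn F (fun z => (‖z‖ : ℂ))
        Filter.atTop (interior K₁) := by
      rw [Metric.tendstoUniformlyOn_iff]
      intro ε hε
      obtain ⟨N, hN⟩ := exists_nat_one_div_lt hε
      filter_upwards [Filter.eventually_ge_atTop N] with n hn z hz
      have h1 := hgb n (z, ω z) (hmem z (interior_subset hz))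
      rw [Complex.dist_eq]
      have h2 : (1 : ℝ) / (n + 1) ≤ 1 / (N + 1) := by
        apply one_div_le_one_div_of_le (by positivity)
        have : (N : ℝ) ≤ n := Nat.cast_le.mpr hn
        linarith
      calc ‖(‖z‖ : ℂ) - F n z‖ < 1 / (n + 1) := h1
        _ ≤ 1 / (N + 1) := h2
        _ < ε := hN
    have habs : DifferentiableOn ℂ (fun z => (‖z‖ : ℂ)) (interior K₁) :=
      hunif.tendstoLocallyUniformlyOn.differentiableOn
        (Filter.Eventually.of_forall hFd) isOpen_interior
    obtain ⟨z₀, hz₀⟩ := hint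
    obtain ⟨r, hr, hball⟩ := Metric.isOpen_iff.mp isOpen_interior z₀ hz₀
    have han : AnalyticOnNhd ℂ (fun z => (‖z‖ : ℂ)) (Metric.ball z₀ r) :=
      (habs.mono hball).analyticOnNhd Metric.isOpen_ball
    have hz₀b : z₀ ∈ Metric.ball z₀ r := Metric.mem_ball_self hr
    rcases han.is_constant_or_isOpen (convex_ball z₀ r).isPreconnected with
      ⟨w, hw⟩ | hopen
    · -- constant case: |·| constant on a ball, impossible
      by_cases h0 : z₀ = 0
      · have hz₁b : ((r / 2 : ℝ) : ℂ) ∈ Metric.ball z₀ r := by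
          rw [Metric.mem_ball, Complex.dist_eq, h0, sub_zero, Complex.norm_real, Real.norm_eq_abs,
            abs_of_nonneg (by linarith : (0:ℝ) ≤ r / 2)]
          linarith
        have e0 := hw z₀ hz₀b
        have e1 := hw _ hz₁b
        rw [h0] at e0
        simp only [norm_zero, Complex.ofReal_zero] at e0
        rw [Complex.norm_real, Real.norm_eq_abs, abs_of_nonneg (by linarith : (0:ℝ) ≤ r / 2)] at e1
        rw [← e0] at e1
        have : (r / 2 : ℝ) = 0 := by exact_mod_cast e1
        linarith
      · set z₁ : ℂ := z₀ + (r / 2 : ℝ) * (z₀ / ‖z₀‖) with hz₁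
        have hz0a : (0 : ℝ) < ‖z₀‖ := by
          simpa [norm_pos_iff] using h0
        have hz₁b : z₁ ∈ Metric.ball z₀ r := by
          rw [Metric.mem_ball, Complex.dist_eq]
          have : z₁ - z₀ = (r / 2 : ℝ) * (z₀ / ‖z₀‖) := by
            rw [hz₁]; ring
          rw [this]
          rw [norm_mul, norm_div, Complex.norm_real, Real.norm_eq_abs, Complex.norm_real, Real.norm_eq_abs,
            abs_of_nonneg (le_of_lt hz0a), div_self (ne_of_gt hz0a),
            abs_of_nonneg (by linarith : (0:ℝ) ≤ r / 2)]
          linarith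
        have habs₁ : ‖z₁‖ = ‖z₀‖ + r / 2 := by
          have hrw : z₁ = (((‖z₀‖ + r / 2) / ‖z₀‖ : ℝ) : ℂ) * z₀ := by
            rw [hz₁]
            push_cast
            field_simp [Complex.ofReal_ne_zero.mpr (ne_of_gt hz0a)]
          rw [hrw, norm_mul, Complex.norm_real, Real.norm_eq_abs,
            abs_of_nonneg (by positivity : (0:ℝ) ≤ (‖z₀‖ + r / 2) / ‖z₀‖)]
          field_simp
        have e0 := hw z₀ hz₀b
        have e1 := hw z₁ hz₁b
        rw [← e0] at e1
        have : ‖z₁‖ = ‖z₀‖ := by exact_mod_cast e1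
        rw [habs₁] at this
        linarith
    · -- open case: image lies in ℝ, cannot be open
      have himg : IsOpen ((fun z => (‖z‖ : ℂ)) '' Metric.ball z₀ r) :=
        hopen _ subset_rfl Metric.isOpen_ball
      have hmemi : ((‖z₀‖ : ℂ)) ∈
          (fun z => (‖z‖ : ℂ)) '' Metric.ball z₀ r := ⟨z₀, hz₀b, rfl⟩
      obtain ⟨δ, hδ, hδb⟩ := Metric.isOpen_iff.mp himg _ hmemi
      have hp : (‖z₀‖ : ℂ) + (δ / 2 : ℝ) * Complex.I ∈
          Metric.ball ((‖z₀‖ : ℂ)) δ := by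
        rw [Metric.mem_ball, Complex.dist_eq]
        have : (‖z₀‖ : ℂ) + (δ / 2 : ℝ) * Complex.I - (‖z₀‖ : ℂ)
            = (δ / 2 : ℝ) * Complex.I := by ring
        rw [this, norm_mul, Complex.norm_real, Real.norm_eq_abs, Complex.norm_I,
          abs_of_nonneg (by linarith : (0:ℝ) ≤ δ / 2)]
        linarith
      obtain ⟨z, _, hz⟩ := hδb hp
      have him := congrArg Complex.im hz
      simp [Complex.ofReal_im, Complex.add_im, Complex.mul_im, Complex.I_im,
        Complex.I_re] at him
      linarith
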